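/- Let E be a lextensive category. Then the class of complemented inclusions and the class of split epimorphisms form a weak factorisation system on E. -/

import Mathlib

open CategoryTheory Limits

universe v u

/-- A morphism is a complemented inclusion if it is isomorphic to a coproduct inclusion
`A ↪ A + C`, i.e. if it admits a complement `g : C ⟶ B` exhibiting `B` as the coproduct
of `A` and `C` with `f` as the first coproduct inclusion. -/
def IsComplementedInclusion {E : Type u} [Category.{v} E] {A B : E} (f : A ⟶ B) : Prop :=
  ∃ (C : E) (g : C ⟶ B), Nonempty (IsColimit (BinaryCofan.mk f g))

/-- A weak factorisation system on a category: every map factors as a map in `L` followed by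
a map in `R`, and the two classes determine each other by the lifting property. -/
def IsWFS {C : Type*} [Category C] (L R : MorphismProperty C) : Prop :=
  (∀ {X Y : C} (f : X ⟶ Y), ∃ (Z : C) (i : X ⟶ Z) (p : Z ⟶ Y), L i ∧ R p ∧ i ≫ p = f) ∧
    (∀ {X Y : C} (f : X ⟶ Y),
      L f ↔ ∀ {A B : C} (g : A ⟶ B), R g → HasLiftingProperty f g) ∧
    (∀ {X Y : C} (f : X ⟶ Y),
      R f ↔ ∀ {A B : C} (g : A ⟶ B), L g → HasLiftingProperty g f)

/-- The class of complemented inclusions. -/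
def complementedInclusions (E : Type u) [Category.{v} E] : MorphismProperty E :=
  fun _ _ f => IsComplementedInclusion f

/-- The class of split epimorphisms. -/
def splitEpis (E : Type u) [Category.{v} E] : MorphismProperty E :=
  fun _ _ f => IsSplitEpi f

section Aux

variable {E : Type u} [Category.{v} E]

/-- A complemented inclusion has the left lifting property against any split epimorphism. -/
lemma complemented_hasLiftingProperty {X Z A B : E} {f : X ⟶ Z} (hf : IsComplementedInclusion f)
    {p : A ⟶ B} (hp : IsSplitEpi p) : HasLiftingProperty f p := by
  obtain ⟨C, g, ⟨hc⟩⟩ := hf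
  obtain ⟨s⟩ := hp.exists_splitEpi
  constructor
  intro u v sq
  set l : Z ⟶ A := hc.desc (BinaryCofan.mk u (g ≫ v ≫ s.section_)) with hl
  have h₁ : f ≫ l = u := hc.fac (BinaryCofan.mk u (g ≫ v ≫ s.section_)) ⟨WalkingPair.left⟩
  have h₂ : g ≫ l = g ≫ v ≫ s.section_ :=
    hc.fac (BinaryCofan.mk u (g ≫ v ≫ s.section_)) ⟨WalkingPair.right⟩
  refine ⟨⟨⟨l, h₁, ?_⟩⟩⟩
  apply BinaryCofan.IsColimit.hom_ext hc
  · show f ≫ l ≫ p = f ≫ v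
    rw [← Category.assoc, h₁, sq.w]
  · show g ≫ l ≫ p = g ≫ v
    rw [← Category.assoc, h₂]
    simp [s.id]

end Aux

/-- **Statement 12.** Let `E` be a lextensive category.  Then the complemented inclusions and
the split epimorphisms form a weak factorisation system on `E`. -/
theorem complementedInclusions_splitEpis_wfs
    (E : Type u) [Category.{v} E] [HasFiniteLimits E] [FinitaryExtensive E] :
    IsWFS (complementedInclusions E) (splitEpis E) := by
  refine ⟨?_, ?_, ?_⟩
  · -- factorisation
    intro X Y f
    refine ⟨X ⨿ Y, coprod.inl, coprod.desc f (𝟙 Y),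
      ⟨Y, coprod.inr, ⟨coprodIsCoprod X Y⟩⟩,
      ⟨⟨⟨coprod.inr, coprod.inr_desc _ _⟩⟩⟩, coprod.inl_desc _ _⟩
  · -- characterisation of L
    intro X Y f
    constructor
    · intro hf A B g hg
      exact complemented_hasLiftingProperty hf hg
    · intro h
      -- lift against `coprod.desc f (𝟙 Y)`
      set q : (X ⨿ Y) ⟶ Y := coprod.desc f (𝟙 Y) with hq
      haveI : HasLiftingProperty f q := h q ⟨⟨⟨coprod.inr, coprod.inr_desc _ _⟩⟩⟩
      have sq : CommSq coprod.inl f q (𝟙 Y) := ⟨by simp only [hq, Category.comp_id]; exact coprod.inl_desc _ _⟩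
      set l : Y ⟶ X ⨿ Y := sq.lift with hldef
      have hl1 : f ≫ l = coprod.inl := sq.fac_left
      have hl2 : l ≫ q = 𝟙 Y := sq.fac_right
      haveI : IsSplitMono l := IsSplitMono.mk' ⟨q, hl2⟩
      -- pull back the coproduct decomposition along l
      set j₁ : pullback l (coprod.inl : X ⟶ X ⨿ Y) ⟶ Y := pullback.fst l coprod.inl with hj₁
      set a : pullback l (coprod.inl : X ⟶ X ⨿ Y) ⟶ X := pullback.snd l coprod.inl with ha
      set j₂ : pullback l (coprod.inr : Y ⟶ X ⨿ Y) ⟶ Y := pullback.fst l coprod.inr with hj₂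
      set b : pullback l (coprod.inr : Y ⟶ X ⨿ Y) ⟶ Y := pullback.snd l coprod.inr with hb
      have vk := FinitaryExtensive.vanKampen _ (coprodIsCoprod X Y)
      rw [BinaryCofan.isVanKampen_iff] at vk
      obtain ⟨hc⟩ := (vk (BinaryCofan.mk j₁ j₂) a b l pullback.condition.symm
        pullback.condition.symm).mpr
        ⟨IsPullback.of_hasPullback l coprod.inl, IsPullback.of_hasPullback l coprod.inr⟩
      -- the comparison map `X ⟶ pullback l coprod.inl` is an isomorphism
      have hfl : f ≫ l = (𝟙 X) ≫ coprod.inl := by simpa using hl1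
      set f' : X ⟶ pullback l (coprod.inl : X ⟶ X ⨿ Y) := pullback.lift f (𝟙 X) hfl with hf'
      have hfj : f' ≫ j₁ = f := pullback.lift_fst _ _ _
      have hfa : f' ≫ a = 𝟙 X := pullback.lift_snd _ _ _
      have haf2 : a ≫ f = j₁ := by
        have : (a ≫ f) ≫ l = j₁ ≫ l := by
          rw [Category.assoc, hl1]
          exact pullback.condition.symm
        exact (cancel_mono l).mp this
      have haf : a ≫ f' = 𝟙 _ := by
        apply pullback.hom_ext
        · rw [Category.assoc]
          show a ≫ f' ≫ pullback.fst l coprod.inl = _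
          rw [hfj, haf2]
          simp
          exact hj₁
        · rw [Category.assoc]
          show a ≫ f' ≫ pullback.snd l coprod.inl = _
          rw [hfa]
          simp
          exact ha
      haveI : IsIso f' := ⟨a, hfa, haf⟩
      refine ⟨pullback l (coprod.inr : Y ⟶ X ⨿ Y), j₂, ⟨?_⟩⟩
      have fac₁ : ∀ {T : E} (s₁ : X ⟶ T) (s₂ : pullback l (coprod.inr : Y ⟶ X ⨿ Y) ⟶ T),
          j₁ ≫ hc.desc (BinaryCofan.mk (inv f' ≫ s₁) s₂) = inv f' ≫ s₁ :=
        fun s₁ s₂ => hc.fac (BinaryCofan.mk (inv f' ≫ s₁) s₂) ⟨WalkingPair.left⟩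
      have fac₂ : ∀ {T : E} (s₁ : X ⟶ T) (s₂ : pullback l (coprod.inr : Y ⟶ X ⨿ Y) ⟶ T),
          j₂ ≫ hc.desc (BinaryCofan.mk (inv f' ≫ s₁) s₂) = s₂ :=
        fun s₁ s₂ => hc.fac (BinaryCofan.mk (inv f' ≫ s₁) s₂) ⟨WalkingPair.right⟩
      refine BinaryCofan.IsColimit.mk _
        (fun s₁ s₂ => hc.desc (BinaryCofan.mk (inv f' ≫ s₁) s₂)) ?_ ?_ ?_
      · intro T s₁ s₂
        show f ≫ _ = s₁
        rw [← hfj]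
        exact (Category.assoc _ _ _).trans ((congrArg (f' ≫ ·) (fac₁ s₁ s₂)).trans
          (IsIso.hom_inv_id_assoc f' s₁))
      · intro T s₁ s₂
        exact fac₂ s₁ s₂
      · intro T s₁ s₂ m hm₁ hm₂
        apply BinaryCofan.IsColimit.hom_ext hc
        · show j₁ ≫ m = j₁ ≫ _
          refine Eq.trans ?_ (fac₁ s₁ s₂).symm
          have h' : f' ≫ j₁ ≫ m = s₁ :=
            (Category.assoc _ _ _).symm.trans ((congrArg (· ≫ m) hfj).trans (by simpa using hm₁))
          exact (IsIso.inv_hom_id_assoc f' (j₁ ≫ m)).symm.trans (congrArg (inv f' ≫ ·) h')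
        · show j₂ ≫ m = j₂ ≫ _
          refine Eq.trans ?_ (fac₂ s₁ s₂).symm
          exact hm₂
  · -- characterisation of R
    intro X Y f
    constructor
    · intro hf A B g hg
      exact complemented_hasLiftingProperty hg hf
    · intro h
      have hinit : IsComplementedInclusion (initial.to Y) := by
        refine ⟨Y, 𝟙 Y, ⟨?_⟩⟩
        refine BinaryCofan.IsColimit.mk _ (fun _ g => g) ?_ ?_ ?_
        · intro T u g
          apply initialIsInitial.hom_ext
        · intro T u g
          exact Category.id_comp g
        · intro T u g m _ hm₂
          exact (Category.id_comp m).symm.trans hm₂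
      haveI : HasLiftingProperty (initial.to Y) f := h (initial.to Y) hinit
      have sq : CommSq (initial.to X) (initial.to Y) f (𝟙 Y) :=
        ⟨initialIsInitial.hom_ext _ _⟩
      exact ⟨⟨⟨sq.lift, sq.fac_right⟩⟩⟩
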